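/- arXiv:2107.12361 — 2 statements merged into one kernel-verified Lean document; each statement's English description precedes it below -/
import Mathlib

section
/- Sufficiently large regularisation guarantees a very successful iteration: suppose ∇𝒥 is Lipschitz continuous with constant L > 0, fix v ∈ ℝ^n with ∇𝒥(v) ≠ 0, let η₂ ∈ (0,1), and let γ ≥ L/(2 − η₂). Let s solve (J(v)ᵀJ(v) + γI) s = −J(v)ᵀ r(v) and define m(s) = (1/2)‖J(v)s + r(v)‖² + (γ/2)‖s‖². Then 𝒥(v) − m(s) > 0 and the ratio ρ = (𝒥(v) − 𝒥(v + s)) / (𝒥(v) − m(s)) satisfies ρ ≥ η₂. -/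
open scoped RealInnerProductSpace

/-- The nonlinear least-squares objective `𝒥(v) = (1/2)‖r(v)‖²`. -/
noncomputable def nlsObj {n m : ℕ} (r : EuclideanSpace ℝ (Fin n) → EuclideanSpace ℝ (Fin m))
    (v : EuclideanSpace ℝ (Fin n)) : ℝ :=
  (1 / 2) * ‖r v‖ ^ 2

/-- The Jacobian `J(v)` of `r` at `v`, as a continuous linear map. -/
noncomputable def nlsJ {n m : ℕ} (r : EuclideanSpace ℝ (Fin n) → EuclideanSpace ℝ (Fin m))
    (v : EuclideanSpace ℝ (Fin n)) :
    EuclideanSpace ℝ (Fin n) →L[ℝ] EuclideanSpace ℝ (Fin m) :=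
  fderiv ℝ r v

/-- The gradient `∇𝒥(v) = J(v)ᵀ r(v)`. -/
noncomputable def nlsGrad {n m : ℕ} (r : EuclideanSpace ℝ (Fin n) → EuclideanSpace ℝ (Fin m))
    (v : EuclideanSpace ℝ (Fin n)) : EuclideanSpace ℝ (Fin n) :=
  ContinuousLinearMap.adjoint (nlsJ r v) (r v)

lemma nlsObj_hasFDerivAt {n m : ℕ} (r : EuclideanSpace ℝ (Fin n) → EuclideanSpace ℝ (Fin m))
    (hr : ContDiff ℝ 1 r) (w : EuclideanSpace ℝ (Fin n)) :
    HasFDerivAt (nlsObj r) (innerSL ℝ (nlsGrad r w)) w := by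
  have hrw : HasFDerivAt r (nlsJ r w) w :=
    (hr.differentiable one_ne_zero w).hasFDerivAt
  have h1 : HasFDerivAt (fun x => ⟪r x, r x⟫)
      ((fderivInnerCLM ℝ (r w, r w)).comp ((nlsJ r w).prod (nlsJ r w))) w := hrw.inner ℝ hrw
  have h2 := h1.const_mul (1 / 2 : ℝ)
  have hfun : nlsObj r = fun x => (1 / 2 : ℝ) * ⟪r x, r x⟫ := by
    funext x
    rw [real_inner_self_eq_norm_sq]
    rfl
  have hkey : innerSL ℝ (nlsGrad r w)
      = (1 / 2 : ℝ) • (fderivInnerCLM ℝ (r w, r w)).comp ((nlsJ r w).prod (nlsJ r w)) := by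
    ext u
    simp only [innerSL_apply_apply, ContinuousLinearMap.coe_smul', Pi.smul_apply,
      ContinuousLinearMap.coe_comp', Function.comp_apply, ContinuousLinearMap.prod_apply,
      fderivInnerCLM_apply, smul_eq_mul, nlsGrad, ContinuousLinearMap.adjoint_inner_left]
    rw [real_inner_comm (r w) ((nlsJ r w) u)]
    ring
  rw [hfun, hkey]
  exact h2

lemma descent_lemma {n m : ℕ} (r : EuclideanSpace ℝ (Fin n) → EuclideanSpace ℝ (Fin m))
    (hr : ContDiff ℝ 1 r) (L : ℝ) (hL : 0 ≤ L)
    (hlip : ∀ v w, ‖nlsGrad r v - nlsGrad r w‖ ≤ L * ‖v - w‖)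
    (v s : EuclideanSpace ℝ (Fin n)) :
    nlsObj r (v + s) ≤ nlsObj r v + ⟪nlsGrad r v, s⟫ + L / 2 * ‖s‖ ^ 2 := by
  set φ : ℝ → ℝ := fun t => nlsObj r (v + t • s) with hφ
  have hline : ∀ t : ℝ, HasDerivAt (fun t : ℝ => v + t • s) s t := fun t => by
    simpa using ((hasDerivAt_id t).smul_const s).const_add v
  have hφ' : ∀ t : ℝ, HasDerivAt φ ⟪nlsGrad r (v + t • s), s⟫ t := by
    intro t
    have := (nlsObj_hasFDerivAt r hr (v + t • s)).comp_hasDerivAt t (hline t)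
    simp at this
    exact this
  have hgcont : Continuous (nlsGrad r) := by
    have : LipschitzWith (Real.toNNReal L) (nlsGrad r) := by
      apply LipschitzWith.of_dist_le_mul
      intro x y
      rw [dist_eq_norm, dist_eq_norm]
      exact le_trans (hlip x y) (by gcongr; exact Real.le_coe_toNNReal L)
    exact this.continuous
  have hlinec : Continuous (fun t : ℝ => v + t • s) :=
    continuous_const.add (continuous_id.smul continuous_const)
  have hcont : Continuous fun t : ℝ => ⟪nlsGrad r (v + t • s), s⟫ :=
    ((hgcont.comp hlinec).inner continuous_const)
  have hint : IntervalIntegrable (fun t : ℝ => ⟪nlsGrad r (v + t • s), s⟫)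
      MeasureTheory.volume 0 1 := hcont.intervalIntegrable 0 1
  have hFTC : φ 1 - φ 0 = ∫ t in (0:ℝ)..1, ⟪nlsGrad r (v + t • s), s⟫ :=
    (intervalIntegral.integral_eq_sub_of_hasDerivAt (fun t _ => hφ' t) hint).symm
  have hbound : ∀ t ∈ Set.Icc (0:ℝ) 1,
      ⟪nlsGrad r (v + t • s), s⟫ ≤ ⟪nlsGrad r v, s⟫ + L * t * ‖s‖ ^ 2 := by
    intro t ht
    have h1 : ⟪nlsGrad r (v + t • s) - nlsGrad r v, s⟫ ≤ L * t * ‖s‖ ^ 2 := by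
      calc ⟪nlsGrad r (v + t • s) - nlsGrad r v, s⟫
          ≤ ‖nlsGrad r (v + t • s) - nlsGrad r v‖ * ‖s‖ := real_inner_le_norm _ _
        _ ≤ (L * ‖(v + t • s) - v‖) * ‖s‖ := by
            gcongr; exact hlip _ _
        _ = L * t * ‖s‖ ^ 2 := by
            rw [add_sub_cancel_left, norm_smul, Real.norm_eq_abs, abs_of_nonneg ht.1]
            ring
    have h2 := inner_sub_left (𝕜 := ℝ) (nlsGrad r (v + t • s)) (nlsGrad r v) s
    linarith [h2.le, h2.ge]
  have hcont2 : Continuous fun t : ℝ => ⟪nlsGrad r v, s⟫ + L * t * ‖s‖ ^ 2 :=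
    continuous_const.add ((continuous_const.mul continuous_id).mul continuous_const)
  have hmono : (∫ t in (0:ℝ)..1, ⟪nlsGrad r (v + t • s), s⟫)
      ≤ ∫ t in (0:ℝ)..1, (⟪nlsGrad r v, s⟫ + L * t * ‖s‖ ^ 2) :=
    intervalIntegral.integral_mono_on (by norm_num) hint (hcont2.intervalIntegrable 0 1) hbound
  have hval : (∫ t in (0:ℝ)..1, (⟪nlsGrad r v, s⟫ + L * t * ‖s‖ ^ 2))
      = ⟪nlsGrad r v, s⟫ + L / 2 * ‖s‖ ^ 2 := by
    have hi2 : IntervalIntegrable (fun t : ℝ => L * t * ‖s‖ ^ 2) MeasureTheory.volume 0 1 :=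
      Continuous.intervalIntegrable (by fun_prop) 0 1
    rw [intervalIntegral.integral_add intervalIntegrable_const hi2]
    have h3 : (∫ t in (0:ℝ)..1, L * t * ‖s‖ ^ 2)
        = (L * ‖s‖ ^ 2) * ∫ t in (0:ℝ)..1, t := by
      rw [← intervalIntegral.integral_const_mul]
      congr 1; funext t; ring
    rw [h3, integral_id]
    simp
    ring
  have h0 : φ 0 = nlsObj r v := by simp [hφ]
  have h1 : φ 1 = nlsObj r (v + s) := by simp [hφ]
  rw [h0, h1] at hFTC
  linarith [hFTC, hmono, hval.le, hval.ge]

/-- Sufficiently large regularisation guarantees a very successful iteration: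
if `∇𝒥` is `L`-Lipschitz, `∇𝒥(v) ≠ 0` and `γ ≥ L/(2 − η₂)` then the predicted
decrease is positive and `ρ ≥ η₂`. -/
theorem regularisation_large_gamma_very_successful
    {n m : ℕ} (hn : 0 < n) (hm : 0 < m)
    (r : EuclideanSpace ℝ (Fin n) → EuclideanSpace ℝ (Fin m))
    (hr : ContDiff ℝ 1 r)
    -- ∇𝒥 is Lipschitz continuous with constant L
    (L : ℝ) (hL : 0 < L)
    (hlip : ∀ v w, ‖nlsGrad r v - nlsGrad r w‖ ≤ L * ‖v - w‖)
    (v : EuclideanSpace ℝ (Fin n)) (hgrad : nlsGrad r v ≠ 0)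
    (η₂ : ℝ) (hη₂ : η₂ ∈ Set.Ioo (0 : ℝ) 1)
    (γ : ℝ) (hγ : L / (2 - η₂) ≤ γ)
    (s : EuclideanSpace ℝ (Fin n))
    (hstep : ContinuousLinearMap.adjoint (nlsJ r v) (nlsJ r v s) + γ • s =
      -ContinuousLinearMap.adjoint (nlsJ r v) (r v))
    -- the local model m(s) = (1/2)‖J(v)s + r(v)‖² + (γ/2)‖s‖²
    (mdl : EuclideanSpace ℝ (Fin n) → ℝ)
    (hmdl : ∀ sv, mdl sv = (1 / 2) * ‖nlsJ r v sv + r v‖ ^ 2 + (γ / 2) * ‖sv‖ ^ 2) :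
    0 < nlsObj r v - mdl s ∧
    η₂ ≤ (nlsObj r v - nlsObj r (v + s)) / (nlsObj r v - mdl s) := by
  obtain ⟨hη₂0, hη₂1⟩ := hη₂
  have h2η : (0:ℝ) < 2 - η₂ := by linarith
  have hγpos : 0 < γ := lt_of_lt_of_le (div_pos hL h2η) hγ
  have hγL : L ≤ γ * (2 - η₂) := (div_le_iff₀ h2η).mp hγ
  have hs0 : s ≠ 0 := by
    intro h
    apply hgrad
    have h0 := hstep
    rw [h] at h0
    simp only [map_zero, smul_zero, add_zero] at h0
    exact neg_eq_zero.mp h0.symm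
  have hs2 : 0 < ‖s‖ ^ 2 := pow_pos (norm_pos_iff.mpr hs0) 2
  have hinner : ⟪nlsGrad r v, s⟫ = -(‖nlsJ r v s‖ ^ 2) - γ * ‖s‖ ^ 2 := by
    have hc := congrArg (fun x => ⟪x, s⟫) hstep
    simp only [inner_add_left, inner_smul_left, inner_neg_left,
      ContinuousLinearMap.adjoint_inner_left, conj_trivial] at hc
    rw [real_inner_self_eq_norm_sq, real_inner_self_eq_norm_sq] at hc
    have h2 : ⟪nlsGrad r v, s⟫ = ⟪r v, nlsJ r v s⟫ := by
      rw [nlsGrad, ContinuousLinearMap.adjoint_inner_left]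
    rw [h2]
    linarith [hc]
  have hpred : nlsObj r v - mdl s = (1/2) * ‖nlsJ r v s‖ ^ 2 + (γ/2) * ‖s‖ ^ 2 := by
    rw [hmdl s, nlsObj]
    have hexp : ‖nlsJ r v s + r v‖ ^ 2
        = ‖nlsJ r v s‖ ^ 2 + 2 * ⟪nlsJ r v s, r v⟫ + ‖r v‖ ^ 2 := by
      exact norm_add_sq_real _ _
    have h2 : ⟪nlsJ r v s, r v⟫ = ⟪nlsGrad r v, s⟫ := by
      rw [real_inner_comm, nlsGrad, ContinuousLinearMap.adjoint_inner_left]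
    rw [hexp, h2, hinner]; ring
  have hJs : 0 ≤ ‖nlsJ r v s‖ ^ 2 := by positivity
  have hpredpos : 0 < nlsObj r v - mdl s := by
    rw [hpred]; nlinarith
  refine ⟨hpredpos, ?_⟩
  rw [le_div_iff₀ hpredpos]
  have hdesc := descent_lemma r hr L hL.le hlip v s
  rw [hinner] at hdesc
  rw [hpred]
  nlinarith [hdesc]
end

section
/- Guaranteed decrease per backtracking-Armijo Gauss–Newton iteration: assume (A2) and (A4), suppose ∇𝒥 is Lipschitz continuous with constant L > 0, let β, τ ∈ (0,1) and α₀ > 0. Fix v ∈ ℝ^n with ∇𝒥(v) ≠ 0, let s solve J(v)ᵀJ(v) s = −J(v)ᵀ r(v), and let α > 0 satisfy the Armijo condition 𝒥(v + αs) ≤ 𝒥(v) + β·α·(sᵀ∇𝒥(v)), where either α = α₀ or the Armijo condition fails at stepsize α/τ. Then 𝒥(v) − 𝒥(v + αs) ≥ (β/L_r²) · min{ α₀, 2τ(1−β)ν²/L } · ‖∇𝒥(v)‖². -/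
set_option maxHeartbeats 1000000


open scoped RealInnerProductSpace

lemma nls_hasDerivAt {n m : ℕ} (r : EuclideanSpace ℝ (Fin n) → EuclideanSpace ℝ (Fin m))
    (hr : ContDiff ℝ 1 r) (v w : EuclideanSpace ℝ (Fin n)) (t : ℝ) :
    HasDerivAt (fun t : ℝ => nlsObj r (v + t • w)) ⟪nlsGrad r (v + t • w), w⟫ t := by
  set c : ℝ → EuclideanSpace ℝ (Fin n) := fun t => v + t • w with hc
  have hcd : HasDerivAt c w t := by
    exact ((hasDerivAt_const t v).add ((hasDerivAt_id t).smul_const w)).congr_deriv (by simp)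
  have hrc : HasDerivAt (fun t => r (c t)) (nlsJ r (c t) w) t :=
    (hr.differentiable one_ne_zero (c t)).hasFDerivAt.comp_hasDerivAt t hcd
  have hinner := (hrc.inner ℝ hrc).const_mul (1/2 : ℝ)
  have heq : (fun t : ℝ => (1/2 : ℝ) * ⟪r (c t), r (c t)⟫) = fun t : ℝ => nlsObj r (v + t • w) := by
    funext u
    simp only [nlsObj, hc, real_inner_self_eq_norm_sq]
  rw [heq] at hinner
  refine hinner.congr_deriv ?_
  rw [real_inner_comm (r (c t)) (nlsJ r (c t) w)]
  rw [nlsGrad, ← ContinuousLinearMap.adjoint_inner_left]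
  ring

lemma nls_descent {n m : ℕ} (r : EuclideanSpace ℝ (Fin n) → EuclideanSpace ℝ (Fin m))
    (hr : ContDiff ℝ 1 r) (L : ℝ) (hL : 0 < L)
    (hlip : ∀ v w, ‖nlsGrad r v - nlsGrad r w‖ ≤ L * ‖v - w‖)
    (v w : EuclideanSpace ℝ (Fin n)) :
    nlsObj r (v + w) ≤ nlsObj r v + ⟪nlsGrad r v, w⟫ + L / 2 * ‖w‖ ^ 2 := by
  set φ' : ℝ → ℝ := fun t => ⟪nlsGrad r (v + t • w), w⟫ with hφ'
  have hgradlip : LipschitzWith ⟨L, hL.le⟩ (nlsGrad r) := by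
    apply LipschitzWith.of_dist_le_mul
    intro x y
    rw [dist_eq_norm, dist_eq_norm]; exact hlip x y
  have hcont : Continuous φ' := by
    apply Continuous.inner
    · exact hgradlip.continuous.comp (by continuity)
    · exact continuous_const
  have hftc : ∫ t in (0:ℝ)..1, φ' t = nlsObj r (v + w) - nlsObj r v := by
    have := intervalIntegral.integral_eq_sub_of_hasDerivAt
      (f := fun t : ℝ => nlsObj r (v + t • w)) (f' := φ')
      (fun t _ => nls_hasDerivAt r hr v w t) (hcont.intervalIntegrable 0 1)
    simpa using this
  have hmono : ∫ t in (0:ℝ)..1, φ' t ≤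
      ∫ t in (0:ℝ)..1, (⟪nlsGrad r v, w⟫ + (L * ‖w‖ ^ 2) * t) := by
    apply intervalIntegral.integral_mono_on zero_le_one
      (hcont.intervalIntegrable 0 1)
      ((continuous_const.add (continuous_const.mul continuous_id')).intervalIntegrable 0 1)
    intro t ht
    have h1 : φ' t - ⟪nlsGrad r v, w⟫ = ⟪nlsGrad r (v + t • w) - nlsGrad r v, w⟫ := by
      rw [inner_sub_left]
    have h2 : ⟪nlsGrad r (v + t • w) - nlsGrad r v, w⟫ ≤ L * t * ‖w‖ ^ 2 := by
      calc ⟪nlsGrad r (v + t • w) - nlsGrad r v, w⟫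
          ≤ ‖nlsGrad r (v + t • w) - nlsGrad r v‖ * ‖w‖ := real_inner_le_norm _ _
        _ ≤ (L * ‖v + t • w - v‖) * ‖w‖ := by
            apply mul_le_mul_of_nonneg_right (hlip _ _) (norm_nonneg _)
        _ = L * t * ‖w‖ ^ 2 := by
            rw [show v + t • w - v = t • w by abel, norm_smul]
            simp [Real.norm_eq_abs, abs_of_nonneg ht.1]
            ring
    show φ' t ≤ ⟪nlsGrad r v, w⟫ + (L * ‖w‖ ^ 2) * t
    nlinarith [h1, h2]
  have hrhs : ∫ t in (0:ℝ)..1, (⟪nlsGrad r v, w⟫ + (L * ‖w‖ ^ 2) * t)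
      = ⟪nlsGrad r v, w⟫ + L / 2 * ‖w‖ ^ 2 := by
    rw [intervalIntegral.integral_add (f := fun _ => ⟪nlsGrad r v, w⟫)
      (g := fun t : ℝ => (L * ‖w‖ ^ 2) * t) (intervalIntegrable_const)
      ((continuous_const.mul continuous_id').intervalIntegrable 0 1),
      intervalIntegral.integral_const_mul, integral_id]
    simp
    ring
  linarith [hftc ▸ hmono, hrhs ▸ hmono]

/-- Guaranteed decrease per backtracking-Armijo Gauss–Newton iteration:
`𝒥(v) − 𝒥(v + αs) ≥ (β/L_r²) min{α₀, 2τ(1−β)ν²/L} ‖∇𝒥(v)‖²`. -/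
theorem gauss_newton_backtracking_armijo_iteration_decrease
    {n m : ℕ} (hn : 0 < n) (hm : 0 < m)
    (r : EuclideanSpace ℝ (Fin n) → EuclideanSpace ℝ (Fin m))
    (hr : ContDiff ℝ 1 r)
    -- (A2)
    (Lr : ℝ) (hLr : 0 < Lr) (hA2 : ∀ v w, ‖r v - r w‖ ≤ Lr * ‖v - w‖)
    -- (A4)
    (ν : ℝ) (hν : 0 < ν) (hA4 : ∀ v z, ν * ‖z‖ ≤ ‖nlsJ r v z‖)
    -- ∇𝒥 is Lipschitz continuous with constant L
    (L : ℝ) (hL : 0 < L)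
    (hlip : ∀ v w, ‖nlsGrad r v - nlsGrad r w‖ ≤ L * ‖v - w‖)
    (β τ : ℝ) (hβ : β ∈ Set.Ioo (0 : ℝ) 1) (hτ : τ ∈ Set.Ioo (0 : ℝ) 1)
    (α₀ : ℝ) (hα₀ : 0 < α₀)
    (v : EuclideanSpace ℝ (Fin n)) (hgrad : nlsGrad r v ≠ 0)
    -- the Gauss–Newton step
    (s : EuclideanSpace ℝ (Fin n))
    (hstep : ContinuousLinearMap.adjoint (nlsJ r v) (nlsJ r v s) =
      -ContinuousLinearMap.adjoint (nlsJ r v) (r v))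
    (α : ℝ) (hαpos : 0 < α)
    -- the Armijo condition holds at stepsize α
    (harmijo : nlsObj r (v + α • s) ≤ nlsObj r v + β * α * ⟪s, nlsGrad r v⟫)
    -- and either α = α₀ or the Armijo condition fails at stepsize α/τ
    (hback : α = α₀ ∨
      ¬ (nlsObj r (v + (α / τ) • s) ≤ nlsObj r v + β * (α / τ) * ⟪s, nlsGrad r v⟫)) :
    (β / Lr ^ 2) * min α₀ (2 * τ * (1 - β) * ν ^ 2 / L) * ‖nlsGrad r v‖ ^ 2 ≤
      nlsObj r v - nlsObj r (v + α • s) := by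
  obtain ⟨hβ0, hβ1⟩ := hβ
  obtain ⟨hτ0, hτ1⟩ := hτ
  set g := nlsGrad r v with hg
  set J := nlsJ r v with hJ
  -- g = -(Jᵀ J s)
  have hgs : g = -(ContinuousLinearMap.adjoint J (J s)) := by
    rw [hg, nlsGrad, ← hJ, hstep, neg_neg]
  -- ⟪s, g⟫ = -‖J s‖²
  have hsg : ⟪s, g⟫ = -‖J s‖ ^ 2 := by
    rw [hgs, inner_neg_right, ContinuousLinearMap.adjoint_inner_right,
      real_inner_self_eq_norm_sq]
  -- ‖J‖ ≤ Lr
  have hJnorm : ‖J‖ ≤ Lr := by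
    have hlw : LipschitzWith ⟨Lr, hLr.le⟩ r := by
      apply LipschitzWith.of_dist_le_mul
      intro x y
      rw [dist_eq_norm, dist_eq_norm]; exact hA2 x y
    exact norm_fderiv_le_of_lipschitz ℝ hlw
  have hgpos : 0 < ‖g‖ := norm_pos_iff.mpr hgrad
  -- ‖g‖ ≤ Lr * ‖J s‖
  have hgle : ‖g‖ ≤ Lr * ‖J s‖ := by
    have h1 : ‖g‖ ^ 2 = -⟪J s, J g⟫ := by
      nth_rewrite 1 [← real_inner_self_eq_norm_sq]
      nth_rewrite 1 [hgs]
      rw [inner_neg_left, ContinuousLinearMap.adjoint_inner_left]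
    have h2 : -⟪J s, J g⟫ ≤ ‖J s‖ * ‖J g‖ := by
      have := real_inner_le_norm (J s) (-(J g))
      simpa [inner_neg_right] using this
    have h3 : ‖J g‖ ≤ Lr * ‖g‖ := by
      calc ‖J g‖ ≤ ‖J‖ * ‖g‖ := J.le_opNorm g
        _ ≤ Lr * ‖g‖ := mul_le_mul_of_nonneg_right hJnorm (norm_nonneg _)
    have h4 : ‖g‖ ^ 2 ≤ ‖J s‖ * (Lr * ‖g‖) := by
      calc ‖g‖ ^ 2 = -⟪J s, J g⟫ := h1
        _ ≤ ‖J s‖ * ‖J g‖ := h2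
        _ ≤ ‖J s‖ * (Lr * ‖g‖) := mul_le_mul_of_nonneg_left h3 (norm_nonneg _)
    nlinarith [hgpos]
  -- ‖g‖² ≤ Lr² ‖Js‖²
  have hg2 : ‖g‖ ^ 2 ≤ Lr ^ 2 * ‖J s‖ ^ 2 := by
    have h := pow_le_pow_left₀ (norm_nonneg g) hgle 2
    rwa [mul_pow] at h
  -- ν²‖s‖² ≤ ‖Js‖²
  have hνs : ν ^ 2 * ‖s‖ ^ 2 ≤ ‖J s‖ ^ 2 := by
    have h := pow_le_pow_left₀ (by positivity : (0:ℝ) ≤ ν * ‖s‖) (hA4 v s) 2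
    rwa [mul_pow] at h
  -- s ≠ 0
  have hsne : 0 < ‖s‖ := by
    rcases eq_or_ne s 0 with h | h
    · exfalso; apply hgrad; rw [hgs, h]; simp
    · exact norm_pos_iff.mpr h
  -- stepsize lower bound
  have hαmin : min α₀ (2 * τ * (1 - β) * ν ^ 2 / L) ≤ α := by
    rcases hback with h | h
    · rw [h]; exact min_le_left _ _
    · refine le_trans (min_le_right _ _) ?_
      push_neg at h
      set α' := α / τ with hα'
      have hα'pos : 0 < α' := div_pos hαpos hτ0
      have hdes := nls_descent r hr L hL hlip v (α' • s)
      rw [real_inner_smul_right, norm_smul, Real.norm_eq_abs, abs_of_pos hα'pos] at hdes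
      have hgsymm : ⟪g, s⟫ = ⟪s, g⟫ := real_inner_comm s g
      rw [← hg, hgsymm] at hdes
      -- Armijo failure: 𝒥(v+α's) > 𝒥v + βα'⟪s,g⟫
      have hfail := h
      -- combine: βα'⟪s,g⟫ < α'⟪s,g⟫ + L/2 α'²‖s‖²
      have hkey : β * α' * ⟪s, g⟫ < α' * ⟪s, g⟫ + L / 2 * (α' * ‖s‖) ^ 2 := by
        linarith [hdes, hfail]
      have hkey2 : (1 - β) * ‖J s‖ ^ 2 < L / 2 * α' * ‖s‖ ^ 2 := by
        rw [hsg] at hkey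
        have := lt_of_mul_lt_mul_left (by nlinarith [hkey] : α' * ((1 - β) * ‖J s‖ ^ 2) < α' * (L / 2 * α' * ‖s‖ ^ 2)) hα'pos.le
        linarith [this]
      have hkey3 : (1 - β) * ν ^ 2 * ‖s‖ ^ 2 < L / 2 * α' * ‖s‖ ^ 2 := by
        nlinarith [hνs, hβ1]
      have hkey4 : (1 - β) * ν ^ 2 < L / 2 * α' := by
        have hs2 : 0 < ‖s‖ ^ 2 := by positivity
        nlinarith [hkey3]
      have : 2 * τ * (1 - β) * ν ^ 2 / L ≤ τ * α' := by
        rw [div_le_iff₀ hL]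
        have he1 : 2 * τ * (1 - β) * ν ^ 2 = τ * (2 * ((1 - β) * ν ^ 2)) := by ring
        have he2 : τ * α' * L = τ * (α' * L) := by ring
        rw [he1, he2]
        apply mul_le_mul_of_nonneg_left _ hτ0.le
        linarith [hkey4]
      calc 2 * τ * (1 - β) * ν ^ 2 / L ≤ τ * α' := this
        _ = α := by rw [hα']; field_simp [ne_of_gt hτ0]
  -- final chain
  have hdec : β * α * ‖J s‖ ^ 2 ≤ nlsObj r v - nlsObj r (v + α • s) := by
    rw [hsg] at harmijo
    linarith [harmijo]
  have h1β : (0:ℝ) < 1 - β := by linarith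
  have hminpos : 0 < min α₀ (2 * τ * (1 - β) * ν ^ 2 / L) := by
    apply lt_min hα₀
    exact div_pos (mul_pos (mul_pos (by linarith) h1β) (pow_pos hν 2)) hL
  calc (β / Lr ^ 2) * min α₀ (2 * τ * (1 - β) * ν ^ 2 / L) * ‖g‖ ^ 2
      ≤ (β / Lr ^ 2) * α * ‖g‖ ^ 2 := by
        apply mul_le_mul_of_nonneg_right _ (sq_nonneg _)
        apply mul_le_mul_of_nonneg_left hαmin (le_of_lt (div_pos hβ0 (pow_pos hLr 2)))
    _ ≤ (β / Lr ^ 2) * α * (Lr ^ 2 * ‖J s‖ ^ 2) := by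
        apply mul_le_mul_of_nonneg_left hg2
          (mul_nonneg (le_of_lt (div_pos hβ0 (pow_pos hLr 2))) hαpos.le)
    _ = β * α * ‖J s‖ ^ 2 := by field_simp
    _ ≤ nlsObj r v - nlsObj r (v + α • s) := hdec
end
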